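/- Let H₀, H₁, …, H_K be hyperplanes in ℝ^d in general position (every j ≤ d of them intersect in an affine subspace of dimension d−j, and no d+1 of them have a common point). Then H₀ intersects exactly Σ_{i=0}^{d−1} C(K, i) of the open d-dimensional cells of the arrangement of H₁,…,H_K; equivalently, the K hyperplanes partition H₀ into Σ_{i=0}^{d−1} C(K, i) relatively open (d−1)-dimensional cells. -/

import Mathlib

open Module

open RealInnerProductSpace


lemma funct_smul {V : Type} [AddCommGroup V] [Module ℝ V]
    (f g : V →ₗ[ℝ] ℝ) (v : V) (hv : f v = 1)
    (h : ∀ u, f u = 0 → g u = 0) : g = (g v) • f := by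
  ext x
  have h1 : f (x - (f x) • v) = 0 := by simp [hv]
  have h2 := h _ h1
  simp only [map_sub, map_smul, smul_eq_mul, hv, mul_one] at h2
  simp [smul_eq_mul]
  linarith

lemma indep_restrict {V : Type} [AddCommGroup V] [Module ℝ V]
    {K K' : ℕ} (L : Fin K' → V →ₗ[ℝ] ℝ) (i0 : Fin K') (e : Fin K → Fin K')
    (he : Function.Injective e) (hei : ∀ i, e i ≠ i0) (v0 : V) (hv0 : L i0 v0 = 1)
    (s : Finset (Fin K))
    (hind : LinearIndependent ℝ (fun j : (insert i0 (s.image e) : Finset (Fin K')) => L j)) :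
    LinearIndependent ℝ (fun i : s => (L (e i)).comp (LinearMap.ker (L i0)).subtype) := by
  rw [Fintype.linearIndependent_iff]
  intro a hsum i
  set G : V →ₗ[ℝ] ℝ := ∑ i : s, a i • L (e i) with hG
  have hker : ∀ u, L i0 u = 0 → G u = 0 := by
    intro u hu
    have := congrArg (fun (F : (LinearMap.ker (L i0)) →ₗ[ℝ] ℝ) => F ⟨u, hu⟩) hsum
    simpa [hG, LinearMap.sum_apply] using this
  have hmu : G = (G v0) • L i0 := funct_smul _ _ _ hv0 hker
  set μ := G v0 with hμdef
  -- total coefficient function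
  set A : Fin K' → ℝ := fun j => (if j = i0 then -μ else 0) + ∑ i : s, (if e i = j then a i else 0) with hA
  have hnotmem : i0 ∉ s.image e := by
    simp only [Finset.mem_image, not_exists]
    rintro x ⟨hx, hex⟩
    exact hei x hex
  have hAe : ∀ (i : s), A (e i) = a i := by
    rintro ⟨i, hi⟩
    have h1 : (if e i = i0 then -μ else (0:ℝ)) = 0 := by simp [hei i]
    have h2 : ∀ i' : s, (if e (i' : Fin K) = e i then a i' else 0) = (if i' = (⟨i, hi⟩ : s) then a i' else 0) := by
      rintro ⟨i', hi'⟩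
      by_cases h : e i' = e i
      · simp [h, he h, Subtype.ext_iff]
      · have : (⟨i', hi'⟩ : s) ≠ ⟨i, hi⟩ := by
          simp only [ne_eq, Subtype.mk.injEq]
          intro hh; exact h (by rw [hh])
        simp [h, this]
    simp only [hA, h1, zero_add]
    rw [Finset.sum_congr rfl (fun i' _ => h2 i')]
    simp
  have hAi0 : A i0 = -μ := by
    have : ∀ i' : s, (if e (i' : Fin K) = i0 then a i' else (0:ℝ)) = 0 := by
      intro i'; simp [hei i'.1]
    simp [hA, this]
  -- the key linear combination
  have hsum_s : ∑ i ∈ s, A (e i) • L (e i) = G := by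
    rw [hG, Finset.univ_eq_attach, ← Finset.sum_attach s (fun i => A (e i) • L (e i))]
    exact Finset.sum_congr rfl (fun i _ => by rw [hAe i])
  have hcomb : ∑ j : (insert i0 (s.image e) : Finset (Fin K')), A j • L j = 0 := by
    rw [Finset.univ_eq_attach, Finset.sum_attach _ (fun j => A j • L j),
      Finset.sum_insert hnotmem,
      Finset.sum_image (fun x _ y _ h => he h), hsum_s, hAi0, hmu]
    exact (congrArg (· + μ • L i0) (neg_smul μ (L i0))).trans (neg_add_cancel _)
  have := Fintype.linearIndependent_iff.mp hind (fun j => A j) hcomb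
    ⟨e i, by simp only [Finset.mem_insert, Finset.mem_image]; right; exact ⟨i, i.2, rfl⟩⟩
  rw [hAe i] at this
  exact this

/-- nonzero functional has an element mapping to 1 -/
lemma funct_one {V : Type} [AddCommGroup V] [Module ℝ V]
    (f : V →ₗ[ℝ] ℝ) (hf : f ≠ 0) : ∃ v, f v = 1 := by
  have : ∃ u, f u ≠ 0 := by
    by_contra h
    push_neg at h
    exact hf (LinearMap.ext fun u => by simp [h u])
  obtain ⟨u, hu⟩ := this
  exact ⟨(f u)⁻¹ • u, by simp [inv_mul_cancel₀ hu]⟩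

lemma funct_surj {V : Type} [AddCommGroup V] [Module ℝ V]
    (f : V →ₗ[ℝ] ℝ) (hf : f ≠ 0) : Function.Surjective f := by
  obtain ⟨v, hv⟩ := funct_one f hf
  intro r
  exact ⟨r • v, by simp [hv]⟩

lemma funct_ker_finrank {V : Type} [AddCommGroup V] [Module ℝ V] [FiniteDimensional ℝ V]
    {n : ℕ} (hn : finrank ℝ V = n + 1)
    (f : V →ₗ[ℝ] ℝ) (hf : f ≠ 0) : finrank ℝ (LinearMap.ker f) = n := by
  have h1 := LinearMap.finrank_range_add_finrank_ker f
  rw [LinearMap.range_eq_top.mpr (funct_surj f hf), finrank_top, Module.finrank_self, hn] at h1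
  omega


lemma indep_single_ne_zero {ι : Type} [DecidableEq ι] {V : Type} [AddCommGroup V] [Module ℝ V]
    (L : ι → V) (i : ι)
    (h : LinearIndependent ℝ (fun j : ({i} : Finset ι) => L j)) : L i ≠ 0 := by
  intro h0
  have := Fintype.linearIndependent_iff.mp h (fun _ => 1)
  have h2 := this (by
    have : ∀ j : ({i} : Finset ι), L (j : ι) = 0 := by
      rintro ⟨j, hj⟩
      simp only [Finset.mem_singleton] at hj
      subst hj; exact h0
    simp [this]) ⟨i, Finset.mem_singleton_self i⟩
  norm_num at h2


lemma indep_subfamily {V : Type} [AddCommGroup V] [Module ℝ V]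
    {K K' n : ℕ} (L : Fin K' → V →ₗ[ℝ] ℝ) (e : Fin K → Fin K') (he : Function.Injective e)
    (hindep : ∀ s : Finset (Fin K'), s.card ≤ n → LinearIndependent ℝ (fun i : s => L i))
    (s : Finset (Fin K)) (hs : s.card ≤ n) :
    LinearIndependent ℝ (fun i : s => L (e i)) := by
  have h1 : (s.image e).card ≤ n := by rw [Finset.card_image_of_injective s he]; exact hs
  have h2 := hindep (s.image e) h1
  exact h2.comp (fun i : s => (⟨e i, Finset.mem_image_of_mem e i.2⟩ : (s.image e : Finset (Fin K'))))
    (fun i j hij => by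
      apply Subtype.ext
      exact he (by simpa [Subtype.ext_iff] using hij))

lemma perturb {V : Type} [NormedAddCommGroup V] [NormedSpace ℝ V]
    {S : Set V} (hS : IsOpen S) {x : V} (hx : x ∈ S) (v : V) :
    ∃ ε : ℝ, 0 < ε ∧ x + ε • v ∈ S := by
  have hc : Continuous fun ε : ℝ => x + ε • v := by continuity
  have h0 : (fun ε : ℝ => x + ε • v) 0 = x := by simp
  have hev : ∀ᶠ ε in nhds (0:ℝ), x + ε • v ∈ S :=
    hc.continuousAt.preimage_mem_nhds (by simpa using hS.mem_nhds hx)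
  have hev2 : ∀ᶠ ε in nhdsWithin (0:ℝ) (Set.Ioi 0), x + ε • v ∈ S ∧ 0 < ε := by
    refine (eventually_nhdsWithin_of_eventually_nhds hev).and ?_
    exact eventually_mem_nhdsWithin
  obtain ⟨ε, h1, h2⟩ := hev2.exists
  exact ⟨ε, h2, h1⟩

lemma region_open {V : Type} [NormedAddCommGroup V] [NormedSpace ℝ V] [FiniteDimensional ℝ V]
    {K : ℕ} (L : Fin K → V →ₗ[ℝ] ℝ) (c : Fin K → ℝ) (σ : Fin K → Bool) :
    IsOpen {x : V | ∀ i, if σ i then c i < L i x else L i x < c i} := by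
  have : {x : V | ∀ i, if σ i then c i < L i x else L i x < c i}
      = ⋂ i, {x : V | if σ i then c i < L i x else L i x < c i} := by
    ext x; simp [Set.mem_iInter]
  rw [this]
  refine isOpen_iInter_of_finite (fun i => ?_)
  have hc : Continuous (L i) := (L i).continuous_of_finiteDimensional
  by_cases h : σ i
  · simp only [h, if_true]
    exact isOpen_lt continuous_const hc
  · simp only [h, if_false]
    exact isOpen_lt hc continuous_const

lemma region_convex {V : Type} [NormedAddCommGroup V] [NormedSpace ℝ V]
    {K : ℕ} (L : Fin K → V →ₗ[ℝ] ℝ) (c : Fin K → ℝ) (σ : Fin K → Bool) :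
    Convex ℝ {x : V | ∀ i, if σ i then c i < L i x else L i x < c i} := by
  have : {x : V | ∀ i, if σ i then c i < L i x else L i x < c i}
      = ⋂ i, {x : V | if σ i then c i < L i x else L i x < c i} := by
    ext x; simp [Set.mem_iInter]
  rw [this]
  refine convex_iInter (fun i => ?_)
  by_cases h : σ i
  · simp only [h, if_true]
    exact convex_halfSpace_gt (LinearMap.isLinear (L i)) (c i)
  · simp only [h, if_false]
    exact convex_halfSpace_lt (LinearMap.isLinear (L i)) (c i)

lemma componentIn_eq_region {V : Type} [NormedAddCommGroup V] [NormedSpace ℝ V]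
    [FiniteDimensional ℝ V]
    {K : ℕ} (g : Fin K → V →ₗ[ℝ] ℝ) (β : Fin K → ℝ) (x : V)
    (hx : ∀ i, g i x ≠ β i) :
    connectedComponentIn {y : V | ∀ i, g i y ≠ β i} x
      = {y : V | ∀ i, if decide (β i < g i x) then β i < g i y else g i y < β i} := by
  classical
  set σ : Fin K → Bool := fun i => decide (β i < g i x) with hσ_def
  set S := {y : V | ∀ i, g i y ≠ β i} with hS_def
  set R := {y : V | ∀ i, if σ i then β i < g i y else g i y < β i} with hR_def
  have hxR : x ∈ R := by
    intro i
    by_cases h : β i < g i x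
    · rw [if_pos (by simp [hσ_def, h])]
      exact h
    · rw [if_neg (by simp [hσ_def, h])]
      rcases lt_trichotomy (g i x) (β i) with h' | h' | h'
      · exact h'
      · exact absurd h' (hx i)
      · exact absurd h' h
  have hRS : R ⊆ S := by
    intro y hy i
    have := hy i
    by_cases h : σ i
    · rw [if_pos h] at this
      exact ne_of_gt this
    · rw [if_neg h] at this
      exact ne_of_lt this
  apply Set.Subset.antisymm
  · -- component ⊆ R
    set Vv := ⋃ i, {y : V | if σ i then g i y < β i else β i < g i y} with hVv_def
    have hVvopen : IsOpen Vv := by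
      refine isOpen_iUnion (fun i => ?_)
      by_cases h : σ i
      · simp only [h, if_true]
        exact isOpen_lt (g i).continuous_of_finiteDimensional continuous_const
      · simp only [h, if_false]
        exact isOpen_lt continuous_const (g i).continuous_of_finiteDimensional
    have hsub : S ⊆ R ∪ Vv := by
      intro y hy
      by_cases h : y ∈ Vv
      · right; exact h
      · left
        intro i
        have hni : ¬ (if σ i then g i y < β i else β i < g i y) := by
          intro hcon
          exact h (Set.mem_iUnion.mpr ⟨i, hcon⟩)
        by_cases hs : σ i
        · rw [if_pos hs] at hni ⊢
          rcases lt_trichotomy (g i y) (β i) with h' | h' | h'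
          · exact absurd h' hni
          · exact absurd h' (hy i)
          · exact h'
        · rw [if_neg hs] at hni ⊢
          rcases lt_trichotomy (g i y) (β i) with h' | h' | h'
          · exact h'
          · exact absurd h' (hy i)
          · exact absurd h' hni
    have hdisj : Disjoint R Vv := by
      rw [Set.disjoint_left]
      intro y hyR hyV
      obtain ⟨i, hi⟩ := Set.mem_iUnion.mp hyV
      have := hyR i
      by_cases hs : σ i
      · rw [if_pos hs] at this
        simp only [Set.mem_setOf_eq, if_pos hs] at hi
        linarith
      · rw [if_neg hs] at this
        simp only [Set.mem_setOf_eq, if_neg hs] at hi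
        linarith
    have hconn : IsPreconnected (connectedComponentIn S x) := isPreconnected_connectedComponentIn
    refine IsPreconnected.subset_left_of_subset_union (region_open g β σ) hVvopen hdisj
      ((connectedComponentIn_subset S x).trans hsub) ⟨x, ?_, hxR⟩ hconn
    exact mem_connectedComponentIn (hRS hxR)
  · exact (region_convex g β σ).isPreconnected.subset_connectedComponentIn hxR hRS


lemma seg_lt {a b cc t : ℝ} (h1 : cc < a) (h2 : cc < b) (ht0 : 0 < t) (ht1 : t < 1) :
    cc < a + t * (b - a) := by nlinarith

lemma seg_gt {a b cc t : ℝ} (h1 : a < cc) (h2 : b < cc) (ht0 : 0 < t) (ht1 : t < 1) :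
    a + t * (b - a) < cc := by nlinarith

lemma pascal_sum (K m : ℕ) :
    ∑ i ∈ Finset.range (m + 2), (K + 1).choose i
      = ∑ i ∈ Finset.range (m + 2), K.choose i + ∑ i ∈ Finset.range (m + 1), K.choose i := by
  rw [Finset.sum_range_succ' (fun i => (K + 1).choose i),
    Finset.sum_range_succ' (fun i => K.choose i)]
  simp only [Nat.choose_succ_succ, Finset.sum_add_distrib, Nat.choose_zero_right,
    Nat.succ_eq_add_one]
  omega

set_option maxHeartbeats 1000000 in
theorem signcount : ∀ (K n : ℕ) (V : Type) [NormedAddCommGroup V] [NormedSpace ℝ V]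
    [FiniteDimensional ℝ V]
    (L : Fin K → V →ₗ[ℝ] ℝ) (c : Fin K → ℝ),
    (∀ s : Finset (Fin K), s.card ≤ n → LinearIndependent ℝ (fun i : s => L i)) →
    (∀ s : Finset (Fin K), s.card = n + 1 → ¬ ∃ x : V, ∀ i ∈ s, L i x = c i) →
    finrank ℝ V = n →
    {σ : Fin K → Bool | ∃ x : V, ∀ i, if σ i then c i < L i x else L i x < c i}.ncard
      = ∑ i ∈ Finset.range (n + 1), K.choose i := by
  intro K
  induction K with
  | zero =>
    intro n V _ _ _ L c _ _ _
    have h1 : {σ : Fin 0 → Bool | ∃ x : V, ∀ i, if σ i then c i < L i x else L i x < c i}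
        = Set.univ := by
      ext σ
      simp only [Set.mem_setOf_eq, Set.mem_univ, iff_true]
      exact ⟨0, fun i => i.elim0⟩
    rw [h1, Set.ncard_univ, Nat.card_eq_fintype_card]
    rw [Finset.sum_eq_single 0]
    · simp
    · intro b _ hb
      match b, hb with
      | (b+1), _ => simp
    · intro h; simp at h
  | succ K IH =>
    intro n V _ _ _ L c hindep hno hrank
    match n with
    | 0 =>
      have hsub : Subsingleton V := Module.finrank_zero_iff.mp hrank
      have hc : ∀ i, c i ≠ 0 := by
        intro i hci
        exact hno {i} (by simp) ⟨0, by simp [hci]⟩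
      have h1 : {σ : Fin (K+1) → Bool | ∃ x : V, ∀ i, if σ i then c i < L i x else L i x < c i}
          = {fun i => decide (c i < 0)} := by
        ext σ
        simp only [Set.mem_setOf_eq, Set.mem_singleton_iff]
        constructor
        · rintro ⟨x, hx⟩
          have hx0 : x = 0 := Subsingleton.elim _ _
          funext i
          have hxi := hx i
          rw [hx0] at hxi
          simp only [map_zero] at hxi
          by_cases h : σ i
          · rw [if_pos h] at hxi
            simp [h, hxi]
          · simp only [Bool.not_eq_true] at h
            rw [if_neg (by simp [h])] at hxi
            simp [h, show ¬ (c i < 0) by linarith]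
        · rintro rfl
          refine ⟨0, fun i => ?_⟩
          simp only [map_zero]
          rcases lt_or_gt_of_ne (hc i) with h | h
          · rw [if_pos (by simp [h])]
            exact h
          · rw [if_neg (by simp [show ¬ (c i < 0) by linarith])]
            exact h
      rw [h1, Set.ncard_singleton]
      simp
    | (m+1) =>
      classical
      set n := m + 1 with hn_def
      set f := L (Fin.last K) with hf_def
      have hfne : f ≠ 0 :=
        indep_single_ne_zero L (Fin.last K) (hindep {Fin.last K} (by simp [hn_def]))
      obtain ⟨v, hv⟩ := funct_one f hfne
      set W := LinearMap.ker f with hW_def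
      have hrankW : finrank ℝ W = m := funct_ker_finrank hrank f hfne
      set p := (c (Fin.last K)) • v with hp_def
      have hfp : f p = c (Fin.last K) := by simp [hp_def, hv]
      set L' : Fin K → W →ₗ[ℝ] ℝ := fun i => (L i.castSucc).comp W.subtype with hL'_def
      set c' : Fin K → ℝ := fun i => c i.castSucc - L i.castSucc p with hc'_def
      have hc'i : ∀ i : Fin K, c' i = c i.castSucc - L i.castSucc p := fun _ => rfl
      have hL'i : ∀ (i : Fin K) (u : W), L' i u = L i.castSucc (u : V) := fun _ _ => rfl
      have hcastne : ∀ i : Fin K, i.castSucc ≠ Fin.last K := fun i => (Fin.castSucc_lt_last i).ne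
      have hnotmem : ∀ s : Finset (Fin K), Fin.last K ∉ s.image Fin.castSucc := by
        intro s
        simp only [Finset.mem_image, not_exists]
        rintro x ⟨_, hx⟩
        exact hcastne x hx
      -- hypotheses for the restricted arrangement on W
      have hindep' : ∀ s : Finset (Fin K), s.card ≤ m →
          LinearIndependent ℝ (fun i : s => L' i) := by
        intro s hs
        refine indep_restrict L (Fin.last K) Fin.castSucc (Fin.castSucc_injective K)
          hcastne v hv s (hindep _ ?_)
        calc (insert (Fin.last K) (s.image Fin.castSucc)).card
            ≤ (s.image Fin.castSucc).card + 1 := Finset.card_insert_le _ _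
          _ = s.card + 1 := by rw [Finset.card_image_of_injective s (Fin.castSucc_injective K)]
          _ ≤ n := by omega
      have hno' : ∀ s : Finset (Fin K), s.card = m + 1 →
          ¬ ∃ u : W, ∀ i ∈ s, L' i u = c' i := by
        rintro s hs ⟨u, hu⟩
        refine hno (insert (Fin.last K) (s.image Fin.castSucc)) ?_ ⟨p + (u : V), ?_⟩
        · rw [Finset.card_insert_of_notMem (hnotmem s),
            Finset.card_image_of_injective s (Fin.castSucc_injective K), hs]
        · intro j hj
          rcases Finset.mem_insert.mp hj with rfl | hj
          · have hu0 : f (u : V) = 0 := u.2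
            rw [map_add, hfp, hu0, add_zero]
          · obtain ⟨i, hi, rfl⟩ := Finset.mem_image.mp hj
            have h3 := hu i hi
            rw [hL'i, hc'i] at h3
            rw [map_add, h3]
            ring
      -- hypotheses for the first K hyperplanes on V
      have hindepK : ∀ s : Finset (Fin K), s.card ≤ n →
          LinearIndependent ℝ (fun i : s => L (Fin.castSucc (i : Fin K))) :=
        indep_subfamily L Fin.castSucc (Fin.castSucc_injective K) hindep
      have hnoK : ∀ s : Finset (Fin K), s.card = n + 1 →
          ¬ ∃ x : V, ∀ i ∈ s, L i.castSucc x = c i.castSucc := by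
        rintro s hs ⟨x, hx⟩
        refine hno (s.image Fin.castSucc)
          (by rw [Finset.card_image_of_injective s (Fin.castSucc_injective K), hs]) ⟨x, ?_⟩
        intro j hj
        obtain ⟨i, hi, rfl⟩ := Finset.mem_image.mp hj
        exact hx i hi
      have IH1 := IH n V (fun i => L i.castSucc) (fun i => c i.castSucc) hindepK hnoK hrank
      have IH2 := IH m W L' c' hindep' hno' hrankW
      -- the sets
      set A := {σ : Fin (K+1) → Bool | ∃ x : V, ∀ i, if σ i then c i < L i x else L i x < c i}
        with hA_def
      set B := {τ : Fin K → Bool | ∃ x : V, ∀ i,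
        if τ i then c i.castSucc < L i.castSucc x else L i.castSucc x < c i.castSucc} with hB_def
      set Bp := {τ : Fin K → Bool | ∃ x : V, (∀ i,
        if τ i then c i.castSucc < L i.castSucc x else L i.castSucc x < c i.castSucc)
        ∧ c (Fin.last K) < f x} with hBp_def
      set Bm := {τ : Fin K → Bool | ∃ x : V, (∀ i,
        if τ i then c i.castSucc < L i.castSucc x else L i.castSucc x < c i.castSucc)
        ∧ f x < c (Fin.last K)} with hBm_def
      set B' := {τ : Fin K → Bool | ∃ u : W, ∀ i,
        if τ i then c' i < L' i u else L' i u < c' i} with hB'_def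
      -- splitting A
      have hsplit : A = (fun τ : Fin K → Bool => (Fin.snoc τ true : Fin (K+1) → Bool)) '' Bp
          ∪ (fun τ : Fin K → Bool => (Fin.snoc τ false : Fin (K+1) → Bool)) '' Bm := by
        ext σ
        constructor
        · rintro ⟨x, hx⟩
          have hcond : ∀ i : Fin K,
              if σ i.castSucc then c i.castSucc < L i.castSucc x
              else L i.castSucc x < c i.castSucc := fun i => hx i.castSucc
          by_cases h : σ (Fin.last K)
          · left
            refine ⟨fun i => σ i.castSucc, ⟨x, hcond, ?_⟩, ?_⟩
            · have h2 := hx (Fin.last K)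
              rw [if_pos h] at h2
              exact h2
            · funext j
              refine Fin.lastCases ?_ (fun i => ?_) j
              · simp [Fin.snoc_last, h]
              · simp [Fin.snoc_castSucc]
          · right
            simp only [Bool.not_eq_true] at h
            refine ⟨fun i => σ i.castSucc, ⟨x, hcond, ?_⟩, ?_⟩
            · have h2 := hx (Fin.last K)
              rw [if_neg (by simp [h])] at h2
              exact h2
            · funext j
              refine Fin.lastCases ?_ (fun i => ?_) j
              · simp [Fin.snoc_last, h]
              · simp [Fin.snoc_castSucc]
        · rintro (⟨τ, ⟨x, hτ, hgt⟩, rfl⟩ | ⟨τ, ⟨x, hτ, hlt⟩, rfl⟩)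
          · refine ⟨x, fun j => ?_⟩
            refine Fin.lastCases ?_ (fun i => ?_) j
            · rw [if_pos (by simp [Fin.snoc_last])]
              exact hgt
            · have hsc : (Fin.snoc τ true : Fin (K+1) → Bool) i.castSucc = τ i :=
                Fin.snoc_castSucc _ _ _
              by_cases h : τ i
              · rw [if_pos (by simp [hsc, h])]
                have := hτ i; rw [if_pos h] at this; exact this
              · simp only [Bool.not_eq_true] at h
                rw [if_neg (by simp [hsc, h])]
                have := hτ i; rw [if_neg (by simp [h])] at this; exact this
          · refine ⟨x, fun j => ?_⟩
            refine Fin.lastCases ?_ (fun i => ?_) j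
            · rw [if_neg (by simp [Fin.snoc_last])]
              exact hlt
            · have hsc : (Fin.snoc τ false : Fin (K+1) → Bool) i.castSucc = τ i :=
                Fin.snoc_castSucc _ _ _
              by_cases h : τ i
              · rw [if_pos (by simp [hsc, h])]
                have := hτ i; rw [if_pos h] at this; exact this
              · simp only [Bool.not_eq_true] at h
                rw [if_neg (by simp [hsc, h])]
                have := hτ i; rw [if_neg (by simp [h])] at this; exact this
      have hsnoc_inj : ∀ bb : Bool,
          Function.Injective (fun τ : Fin K → Bool => (Fin.snoc τ bb : Fin (K+1) → Bool)) := by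
        intro bb τ₁ τ₂ h
        funext i
        have := congrFun h i.castSucc
        simpa [Fin.snoc_castSucc] using this
      have hdisj : Disjoint
          ((fun τ : Fin K → Bool => (Fin.snoc τ true : Fin (K+1) → Bool)) '' Bp)
          ((fun τ : Fin K → Bool => (Fin.snoc τ false : Fin (K+1) → Bool)) '' Bm) := by
        rw [Set.disjoint_left]
        rintro σ ⟨τ₁, _, rfl⟩ ⟨τ₂, _, h⟩
        have h1 := congrFun h (Fin.last K)
        simp [Fin.snoc_last] at h1
      have hcardA : A.ncard = Bp.ncard + Bm.ncard := by
        rw [hsplit, Set.ncard_union_eq hdisj (Set.toFinite _) (Set.toFinite _),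
          Set.ncard_image_of_injective _ (hsnoc_inj true),
          Set.ncard_image_of_injective _ (hsnoc_inj false)]
      -- union is B
      have hcup : Bp ∪ Bm = B := by
        ext τ
        constructor
        · rintro (⟨x, hx, _⟩ | ⟨x, hx, _⟩) <;> exact ⟨x, hx⟩
        · rintro ⟨x, hx⟩
          rcases lt_trichotomy (f x) (c (Fin.last K)) with h | h | h
          · right; exact ⟨x, hx, h⟩
          · left
            obtain ⟨ε, hε, hmem⟩ := perturb
              (region_open (fun i : Fin K => L i.castSucc) (fun i => c i.castSucc) τ) hx v
            refine ⟨x + ε • v, hmem, ?_⟩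
            rw [map_add, map_smul, h, smul_eq_mul, hv, mul_one]
            linarith
          · left; exact ⟨x, hx, h⟩
      -- intersection is B'
      have hcap : Bp ∩ Bm = B' := by
        ext τ
        constructor
        · rintro ⟨⟨xp, hxp, hgt⟩, ⟨xm, hxm, hlt⟩⟩
          obtain ⟨t, ht0, ht1, hfy0⟩ : ∃ t : ℝ, 0 < t ∧ t < 1 ∧
              f xm + t * (f xp - f xm) = c (Fin.last K) := by
            have hd : 0 < f xp - f xm := by linarith
            refine ⟨(c (Fin.last K) - f xm) / (f xp - f xm), div_pos (by linarith) hd, ?_, ?_⟩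
            · rw [div_lt_one hd]; linarith
            · field_simp
              ring
          set y := xm + t • (xp - xm) with hy_def
          have hfy : f y = c (Fin.last K) := by
            rw [hy_def, map_add, map_smul, map_sub, smul_eq_mul]
            exact hfy0
          have hyW : y - p ∈ W := by
            rw [hW_def, LinearMap.mem_ker, map_sub, hfy, hfp, sub_self]
          refine ⟨⟨y - p, hyW⟩, fun i => ?_⟩
          have hLy : L i.castSucc y
              = L i.castSucc xm + t * (L i.castSucc xp - L i.castSucc xm) := by
            rw [hy_def, map_add, map_smul, map_sub, smul_eq_mul]
          have hL'u : L' i (⟨y - p, hyW⟩ : W) = L i.castSucc y - L i.castSucc p := by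
            rw [hL'i]; exact map_sub _ _ _
          have h1 := hxp i
          have h2 := hxm i
          by_cases h : τ i
          · rw [if_pos h] at h1 h2 ⊢
            rw [hL'u, hc'i, hLy]
            have := seg_lt h2 h1 ht0 ht1
            linarith
          · simp only [Bool.not_eq_true] at h
            rw [if_neg (by simp [h])] at h1 h2 ⊢
            rw [hL'u, hc'i, hLy]
            have := seg_gt h2 h1 ht0 ht1
            linarith
        · rintro ⟨u, hu⟩
          set x := p + (u : V) with hx_def
          have hfx : f x = c (Fin.last K) := by
            rw [hx_def, map_add, hfp]
            have hu0 : f (u : V) = 0 := u.2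
            rw [hu0, add_zero]
          have hcond : ∀ i : Fin K, if τ i then c i.castSucc < L i.castSucc x
              else L i.castSucc x < c i.castSucc := by
            intro i
            have h3 := hu i
            have hL'u : L' i u = L i.castSucc x - L i.castSucc p := by
              rw [hL'i, hx_def, map_add]; ring
            rw [hL'u, hc'i] at h3
            by_cases h : τ i
            · rw [if_pos h] at h3 ⊢
              linarith
            · simp only [Bool.not_eq_true] at h
              rw [if_neg (by simp [h])] at h3 ⊢
              linarith
          constructor
          · obtain ⟨ε, hε, hmem⟩ := perturb
              (region_open (fun i : Fin K => L i.castSucc) (fun i => c i.castSucc) τ) hcond v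
            refine ⟨x + ε • v, hmem, ?_⟩
            rw [map_add, map_smul, hfx, smul_eq_mul, hv, mul_one]
            linarith
          · obtain ⟨ε, hε, hmem⟩ := perturb
              (region_open (fun i : Fin K => L i.castSucc) (fun i => c i.castSucc) τ) hcond (-v)
            refine ⟨x + ε • (-v), hmem, ?_⟩
            rw [map_add, map_smul, hfx, map_neg, smul_eq_mul, hv]
            linarith
      -- finish
      have hBpm : Bp.ncard + Bm.ncard = B.ncard + B'.ncard := by
        have h4 := Set.ncard_union_add_ncard_inter Bp Bm (Set.toFinite _) (Set.toFinite _)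
        rw [hcup, hcap] at h4
        omega
      rw [hcardA, hBpm, IH1, IH2, hn_def]
      exact (pascal_sum K m).symm


set_option maxHeartbeats 1000000 in
/-- let `H₀, H₁, …, H_K` be hyperplanes `{x | ⟪w i, x⟫ = b i}` in `ℝ^d` in
general position (normals of any `≤ d` of them are linearly independent — so any `j ≤ d`
of them meet in an affine subspace of dimension `d − j` — and no `d+1` have a common
point). Then `H₀` meets exactly `∑_{i=0}^{d−1} C(K,i)` of the open cells (connected
components of the complement) of the arrangement of `H₁,…,H_K`. -/
theorem stmt_9 (d K : ℕ)
    (w : Fin (K + 1) → EuclideanSpace ℝ (Fin d)) (b : Fin (K + 1) → ℝ)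
    (hw : ∀ i, w i ≠ 0)
    (hindep : ∀ s : Finset (Fin (K + 1)), s.card ≤ d →
      LinearIndependent ℝ (fun i : s => w i))
    (hnocommon : ∀ s : Finset (Fin (K + 1)), s.card = d + 1 →
      ¬ ∃ x : EuclideanSpace ℝ (Fin d), ∀ i ∈ s, ⟪w i, x⟫ = b i) :
    Set.ncard {C : Set (EuclideanSpace ℝ (Fin d)) |
        ∃ x : EuclideanSpace ℝ (Fin d),
          (∀ i : Fin K, ⟪w i.succ, x⟫ ≠ b i.succ) ∧ ⟪w 0, x⟫ = b 0 ∧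
          C = connectedComponentIn {y | ∀ i : Fin K, ⟪w i.succ, y⟫ ≠ b i.succ} x} =
      ∑ i ∈ Finset.range d, K.choose i := by
  classical
  obtain ⟨m, rfl⟩ : ∃ m, d = m + 1 := by
    cases d with
    | zero => exact absurd (by ext i; exact i.elim0 : w 0 = 0) (hw 0)
    | succ m => exact ⟨m, rfl⟩
  set Φ : EuclideanSpace ℝ (Fin (m + 1)) →ₗ[ℝ] (EuclideanSpace ℝ (Fin (m + 1)) →ₗ[ℝ] ℝ) := innerₗ (EuclideanSpace ℝ (Fin (m + 1))) with hΦ_def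
  have hΦker : LinearMap.ker Φ = ⊥ := by
    rw [LinearMap.ker_eq_bot']
    intro v hv
    have h2 := congrArg (fun F : EuclideanSpace ℝ (Fin (m + 1)) →ₗ[ℝ] ℝ => F v) hv
    simp only [hΦ_def, innerₗ_apply_apply, LinearMap.zero_apply] at h2
    exact inner_self_eq_zero.mp h2
  have hindepF : ∀ s : Finset (Fin (K + 1)), s.card ≤ m + 1 →
      LinearIndependent ℝ (fun i : s => Φ (w i)) := fun s hs => (hindep s hs).map' Φ hΦker
  have hf0 : Φ (w 0) ≠ 0 := by
    intro h
    refine hw 0 ?_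
    have : w 0 ∈ LinearMap.ker Φ := h
    rwa [hΦker, Submodule.mem_bot] at this
  obtain ⟨v0, hv0⟩ := funct_one _ hf0
  set W0 := LinearMap.ker (Φ (w 0)) with hW0_def
  have hrankV : finrank ℝ (EuclideanSpace ℝ (Fin (m + 1))) = m + 1 := by simp [finrank_euclideanSpace]
  have hrankW0 : finrank ℝ W0 = m := funct_ker_finrank hrankV _ hf0
  set p0 := (b 0) • v0 with hp0_def
  have hfp0 : Φ (w 0) p0 = b 0 := by simp [hp0_def, hv0]
  set L' : Fin K → W0 →ₗ[ℝ] ℝ := fun i => (Φ (w i.succ)).comp W0.subtype with hL'_def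
  set c' : Fin K → ℝ := fun i => b i.succ - Φ (w i.succ) p0 with hc'_def
  have hL'i : ∀ (i : Fin K) (u : W0), L' i u = Φ (w i.succ) (u : EuclideanSpace ℝ (Fin (m + 1))) := fun _ _ => rfl
  have hc'i : ∀ i : Fin K, c' i = b i.succ - Φ (w i.succ) p0 := fun _ => rfl
  have hindep' : ∀ s : Finset (Fin K), s.card ≤ m →
      LinearIndependent ℝ (fun i : s => L' i) := by
    intro s hs
    refine indep_restrict (fun i => Φ (w i)) 0 Fin.succ (Fin.succ_injective K)
      (fun i => Fin.succ_ne_zero i) v0 hv0 s (hindepF _ ?_)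
    calc (insert 0 (s.image Fin.succ)).card
        ≤ (s.image Fin.succ).card + 1 := Finset.card_insert_le _ _
      _ = s.card + 1 := by rw [Finset.card_image_of_injective s (Fin.succ_injective K)]
      _ ≤ m + 1 := by omega
  have hno' : ∀ s : Finset (Fin K), s.card = m + 1 →
      ¬ ∃ u : W0, ∀ i ∈ s, L' i u = c' i := by
    rintro s hs ⟨u, hu⟩
    have hmem0 : (0 : Fin (K + 1)) ∉ s.image Fin.succ := by
      simp only [Finset.mem_image, not_exists]
      rintro i ⟨_, hi⟩
      exact Fin.succ_ne_zero i hi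
    refine hnocommon (insert 0 (s.image Fin.succ)) ?_ ⟨p0 + (u : EuclideanSpace ℝ (Fin (m + 1))), ?_⟩
    · rw [Finset.card_insert_of_notMem hmem0,
        Finset.card_image_of_injective s (Fin.succ_injective K), hs]
    · intro j hj
      rcases Finset.mem_insert.mp hj with rfl | hj
      · have hu0 : Φ (w 0) (u : EuclideanSpace ℝ (Fin (m + 1))) = 0 := u.2
        show Φ (w 0) (p0 + (u : EuclideanSpace ℝ (Fin (m + 1)))) = b 0
        rw [map_add, hfp0, hu0, add_zero]
      · obtain ⟨i, hi, rfl⟩ := Finset.mem_image.mp hj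
        have h3 := hu i hi
        rw [hL'i, hc'i] at h3
        show Φ (w i.succ) (p0 + (u : EuclideanSpace ℝ (Fin (m + 1)))) = b i.succ
        rw [map_add, h3]
        ring
  have hcount := signcount K m W0 L' c' hindep' hno' hrankW0
  -- the sign-vector set over the hyperplane H₀, in ambient terms
  set Tx := {σ : Fin K → Bool | ∃ x : EuclideanSpace ℝ (Fin (m + 1)),
    (∀ i, if σ i then b i.succ < Φ (w i.succ) x else Φ (w i.succ) x < b i.succ)
    ∧ Φ (w 0) x = b 0} with hTx_def
  have hTTx : Tx = {σ : Fin K → Bool | ∃ u : W0,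
      ∀ i, if σ i then c' i < L' i u else L' i u < c' i} := by
    ext σ
    constructor
    · rintro ⟨x, hx, hx0⟩
      have hxW : x - p0 ∈ W0 := by
        rw [hW0_def, LinearMap.mem_ker, map_sub, hx0, hfp0, sub_self]
      refine ⟨⟨x - p0, hxW⟩, fun i => ?_⟩
      have hval : L' i (⟨x - p0, hxW⟩ : W0) = Φ (w i.succ) x - Φ (w i.succ) p0 := by
        rw [hL'i]; exact map_sub _ _ _
      have h3 := hx i
      by_cases h : σ i
      · rw [if_pos h] at h3 ⊢
        rw [hval, hc'i]
        linarith
      · simp only [Bool.not_eq_true] at h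
        rw [if_neg (by simp [h])] at h3 ⊢
        rw [hval, hc'i]
        linarith
    · rintro ⟨u, hu⟩
      refine ⟨p0 + (u : EuclideanSpace ℝ (Fin (m + 1))), fun i => ?_, ?_⟩
      · have h3 := hu i
        have hval : L' i u = Φ (w i.succ) (p0 + (u : EuclideanSpace ℝ (Fin (m + 1)))) - Φ (w i.succ) p0 := by
          rw [hL'i, map_add]; ring
        rw [hval, hc'i] at h3
        by_cases h : σ i
        · rw [if_pos h] at h3 ⊢
          linarith
        · simp only [Bool.not_eq_true] at h
          rw [if_neg (by simp [h])] at h3 ⊢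
          linarith
      · have hu0 : Φ (w 0) (u : EuclideanSpace ℝ (Fin (m + 1))) = 0 := u.2
        rw [map_add, hfp0, hu0, add_zero]
  -- the set of cells equals the image of Tx under the region map
  have hmain : {C : Set (EuclideanSpace ℝ (Fin (m + 1))) | ∃ x : EuclideanSpace ℝ (Fin (m + 1)),
        (∀ i : Fin K, ⟪w i.succ, x⟫ ≠ b i.succ) ∧ ⟪w 0, x⟫ = b 0 ∧
        C = connectedComponentIn {y | ∀ i : Fin K, ⟪w i.succ, y⟫ ≠ b i.succ} x}
      = (fun σ : Fin K → Bool => {y : EuclideanSpace ℝ (Fin (m + 1)) | ∀ i,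
          if σ i then b i.succ < Φ (w i.succ) y else Φ (w i.succ) y < b i.succ}) '' Tx := by
    have hSeq : {y : EuclideanSpace ℝ (Fin (m + 1)) | ∀ i : Fin K, ⟪w i.succ, y⟫ ≠ b i.succ}
        = {y : EuclideanSpace ℝ (Fin (m + 1)) | ∀ i : Fin K, Φ (w i.succ) y ≠ b i.succ} := rfl
    ext C
    constructor
    · rintro ⟨x, hne, hx0, rfl⟩
      refine ⟨fun i => decide (b i.succ < Φ (w i.succ) x), ⟨x, fun i => ?_, hx0⟩, ?_⟩
      · by_cases h : b i.succ < Φ (w i.succ) x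
        · rw [if_pos (by simp [h])]
          exact h
        · rw [if_neg (by simp [h])]
          rcases lt_trichotomy (Φ (w i.succ) x) (b i.succ) with h' | h' | h'
          · exact h'
          · exact absurd h' (hne i)
          · exact absurd h' h
      · rw [hSeq]
        exact (componentIn_eq_region (fun i : Fin K => Φ (w i.succ))
          (fun i => b i.succ) x hne).symm
    · rintro ⟨σ, ⟨x, hx, hx0⟩, rfl⟩
      have hσf : σ = fun i => decide (b i.succ < Φ (w i.succ) x) := by
        funext i
        have h3 := hx i
        by_cases h : σ i
        · rw [if_pos h] at h3
          simp [h, h3]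
        · simp only [Bool.not_eq_true] at h
          rw [if_neg (by simp [h])] at h3
          simp [h, show ¬ (b i.succ < Φ (w i.succ) x) by linarith]
      have hne : ∀ i : Fin K, Φ (w i.succ) x ≠ b i.succ := by
        intro i
        have h3 := hx i
        by_cases h : σ i
        · rw [if_pos h] at h3
          exact ne_of_gt h3
        · simp only [Bool.not_eq_true] at h
          rw [if_neg (by simp [h])] at h3
          exact ne_of_lt h3
      refine ⟨x, hne, hx0, ?_⟩
      rw [hSeq]
      subst hσf
      exact (componentIn_eq_region (fun i : Fin K => Φ (w i.succ))
        (fun i => b i.succ) x hne).symm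
  have hinj : Set.InjOn (fun σ : Fin K → Bool => {y : EuclideanSpace ℝ (Fin (m + 1)) | ∀ i,
      if σ i then b i.succ < Φ (w i.succ) y else Φ (w i.succ) y < b i.succ}) Tx := by
    rintro σ ⟨x, hx, _⟩ τ _ heq
    have hxσ : x ∈ {y : EuclideanSpace ℝ (Fin (m + 1)) | ∀ i,
        if σ i then b i.succ < Φ (w i.succ) y else Φ (w i.succ) y < b i.succ} := hx
    have hxτ : x ∈ (fun σ : Fin K → Bool => {y : EuclideanSpace ℝ (Fin (m + 1)) | ∀ i,
        if σ i then b i.succ < Φ (w i.succ) y else Φ (w i.succ) y < b i.succ}) τ := by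
      rw [← heq]; exact hxσ
    funext i
    have h1 := hxσ i
    have h2 := hxτ i
    by_cases hs : σ i <;> by_cases ht : τ i
    · rw [hs, ht]
    · rw [if_pos hs] at h1
      rw [if_neg ht] at h2
      exact absurd h2 (by simp at h1 h2 ⊢; linarith)
    · rw [if_neg hs] at h1
      rw [if_pos ht] at h2
      exact absurd h2 (by simp at h1 h2 ⊢; linarith)
    · simp only [Bool.not_eq_true] at hs ht
      rw [hs, ht]
  rw [hmain, Set.ncard_image_of_injOn hinj, hTTx]
  exact hcount
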